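/- arXiv:2603.28036 — 2 statements merged into one kernel-verified Lean document; each statement's English description precedes it below -/
import Mathlib

section
/- (Uniform interpolation for K_nD, D_nD, T_nD) Each of the distributed knowledge modal systems K_nD, D_nD, and T_nD has the uniform interpolation property. Moreover, for L among these systems, every L-satisfiable formula φ over a finite atom set P and every p ∈ P, the formula ⋁{δ^p : δ ∈ D^P_{dep(φ)}(L) and δ ⊨_L φ} is a uniform interpolant of φ in L over P∖{p}. -/
/-!
Common framework: multi-agent epistemic modal logic with distributed knowledge.
Agents are `Fin n`, atoms are natural numbers.
-/

namespace DKLogic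

/-- Formulas of the language `L_D`: atoms, negation, conjunction, disjunction and the
distributed-knowledge modality `D_B` for nonempty sets `B` of agents (together with the
constants `⊤`/`⊥`, which the paper uses as the empty conjunction/disjunction). -/
inductive Formula (n : ℕ) : Type
  | top : Formula n
  | bot : Formula n
  | atom : ℕ → Formula n
  | neg : Formula n → Formula n
  | and : Formula n → Formula n → Formula n
  | or : Formula n → Formula n → Formula n
  | D : {B : Finset (Fin n) // B.Nonempty} → Formula n → Formula n

namespace Formula

/-- Modal depth of a formula. -/
def depth {n : ℕ} : Formula n → ℕ
  | top => 0
  | bot => 0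
  | atom _ => 0
  | neg φ => depth φ
  | and φ ψ => max (depth φ) (depth ψ)
  | or φ ψ => max (depth φ) (depth ψ)
  | D _ φ => depth φ + 1

/-- The atoms occurring in a formula. -/
def atoms {n : ℕ} : Formula n → Finset ℕ
  | top => ∅
  | bot => ∅
  | atom q => {q}
  | neg φ => atoms φ
  | and φ ψ => atoms φ ∪ atoms ψ
  | or φ ψ => atoms φ ∪ atoms ψ
  | D _ φ => atoms φ

end Formula

/-- A Kripke model over world type `W` with `n` agents. -/
structure KModel (n : ℕ) (W : Type) where
  R : Fin n → W → W → Prop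
  V : W → Set ℕ

/-- The distributed accessibility relation `R_B = ⋂_{i ∈ B} R_i`. -/
def KModel.RB {n : ℕ} {W : Type} (M : KModel n W) (B : Finset (Fin n)) (s t : W) : Prop :=
  ∀ i ∈ B, M.R i s t

/-- Satisfaction. -/
def Sat {n : ℕ} {W : Type} (M : KModel n W) : W → Formula n → Prop
  | _, .top => True
  | _, .bot => False
  | s, .atom q => q ∈ M.V s
  | s, .neg φ => ¬ Sat M s φ
  | s, .and φ ψ => Sat M s φ ∧ Sat M s ψ
  | s, .or φ ψ => Sat M s φ ∨ Sat M s ψ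
  | s, .D B φ => ∀ t : W, M.RB B.1 s t → Sat M t φ

/-- Seriality of a relation. -/
def Serial {W : Type} (R : W → W → Prop) : Prop := ∀ x, ∃ y, R x y

/-- Euclideanness of a relation. -/
def Euclidean {W : Type} (R : W → W → Prop) : Prop := ∀ x y z, R x y → R x z → R y z

/-- The six modal systems. -/
inductive MSys : Type
  | K | D | T | K45 | KD45 | S5

/-- `L`-models: frame conditions on each accessibility relation for each system. -/
def IsModel {n : ℕ} {W : Type} : MSys → KModel n W → Prop
  | .K, _ => True
  | .D, M => ∀ i, Serial (M.R i)
  | .T, M => ∀ i, Reflexive (M.R i)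
  | .K45, M => ∀ i, Transitive (M.R i) ∧ Euclidean (M.R i)
  | .KD45, M => ∀ i, Serial (M.R i) ∧ Transitive (M.R i) ∧ Euclidean (M.R i)
  | .S5, M => ∀ i, Reflexive (M.R i) ∧ Transitive (M.R i) ∧ Euclidean (M.R i)

/-- Semantic consequence over `L`-models. -/
def Entails {n : ℕ} (L : MSys) (φ ψ : Formula n) : Prop :=
  ∀ (W : Type) (M : KModel n W), IsModel L M → ∀ s : W, Sat M s φ → Sat M s ψ

/-- Semantic equivalence over `L`-models. -/
def EquivL {n : ℕ} (L : MSys) (φ ψ : Formula n) : Prop :=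
  Entails L φ ψ ∧ Entails L ψ φ

/-- `L`-satisfiability. -/
def SatL {n : ℕ} (L : MSys) (φ : Formula n) : Prop :=
  ∃ (W : Type) (M : KModel n W) (s : W), IsModel L M ∧ Sat M s φ

/-- Collective `p`-bisimulation between two pointed models. -/
def CollPBisim {n : ℕ} {W W' : Type} (M : KModel n W) (s : W) (M' : KModel n W') (s' : W')
    (p : ℕ) : Prop :=
  ∃ ρ : W → W' → Prop, ρ s s' ∧
    ∀ u u', ρ u u' →
      ((∀ q : ℕ, q ≠ p → (q ∈ M.V u ↔ q ∈ M'.V u')) ∧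
       (∀ B : Finset (Fin n), B.Nonempty → ∀ v, M.RB B u v → ∃ v', M'.RB B u' v' ∧ ρ v v') ∧
       (∀ B : Finset (Fin n), B.Nonempty → ∀ v', M'.RB B u' v' → ∃ v, M.RB B u v ∧ ρ v v'))

/-- `ψ` is a result of forgetting `p` in `φ` in system `L`
(written `dforget_L(φ,p) ≡_L ψ` in the paper). -/
def IsForget {n : ℕ} (L : MSys) (φ : Formula n) (p : ℕ) (ψ : Formula n) : Prop :=
  ψ.atoms ⊆ φ.atoms.erase p ∧
  (∀ (W W' : Type) (M : KModel n W) (M' : KModel n W') (s : W) (s' : W'),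
      IsModel L M → IsModel L M' → Sat M s φ → CollPBisim M s M' s' p → Sat M' s' ψ) ∧
  (∀ (W' : Type) (M' : KModel n W') (s' : W'),
      IsModel L M' → Sat M' s' ψ →
      ∃ (W : Type) (M : KModel n W) (s : W), IsModel L M ∧ Sat M s φ ∧ CollPBisim M s M' s' p)

/-- `L` is closed under forgetting: `dforget_L(φ,p)` exists (as an `L`-satisfiable formula)
for every `L`-satisfiable `φ` and every atom `p`. -/
def ClosedUnderForgetting {n : ℕ} (L : MSys) : Prop :=
  ∀ (φ : Formula n) (p : ℕ), SatL L φ → ∃ ψ : Formula n, SatL L ψ ∧ IsForget L φ p ψ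

/-- `ψ` is a uniform interpolant of `φ` in `L` over `P \ {p}`. -/
def IsUI {n : ℕ} (L : MSys) (P : Finset ℕ) (p : ℕ) (φ ψ : Formula n) : Prop :=
  SatL L ψ ∧ ψ.atoms ⊆ P.erase p ∧
  ∀ χ : Formula n, p ∉ χ.atoms → (Entails L φ χ ↔ Entails L ψ χ)

/-- The uniform interpolation property for the system `L`. -/
def HasUIP {n : ℕ} (L : MSys) : Prop :=
  ∀ (P : Finset ℕ) (p : ℕ) (φ : Formula n),
    p ∈ P → φ.atoms ⊆ P → SatL L φ → ∃ ψ : Formula n, IsUI L P p φ ψ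

/-! ### Canonical formulas -/

/-- Big conjunction of a list of formulas (`⊤` for the empty list). -/
def bigAnd {n : ℕ} : List (Formula n) → Formula n
  | [] => .top
  | φ :: l => .and φ (bigAnd l)

/-- Big disjunction of a list of formulas (`⊥` for the empty list). -/
def bigOr {n : ℕ} : List (Formula n) → Formula n
  | [] => .bot
  | φ :: l => .or φ (bigOr l)

/-- An injective numerical code of formulas, used to fix a canonical ordering. -/
def fcode {n : ℕ} : Formula n → ℕ
  | .top => Nat.pair 0 0
  | .bot => Nat.pair 1 0
  | .atom q => Nat.pair 2 q
  | .neg φ => Nat.pair 3 (fcode φ)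
  | .and φ ψ => Nat.pair 4 (Nat.pair (fcode φ) (fcode ψ))
  | .or φ ψ => Nat.pair 5 (Nat.pair (fcode φ) (fcode ψ))
  | .D B φ => Nat.pair 6 (Nat.pair (B.1.sum fun i => 2 ^ (i : ℕ)) (fcode φ))

/-- Insert a formula into a strictly `fcode`-sorted list (dropping duplicates). -/
def insertF {n : ℕ} (φ : Formula n) : List (Formula n) → List (Formula n)
  | [] => [φ]
  | ψ :: l =>
      if fcode φ < fcode ψ then φ :: ψ :: l
      else if fcode φ = fcode ψ then ψ :: l
      else ψ :: insertF φ l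

/-- The canonical (sorted, duplicate-free) list representing the set of formulas in `l`. -/
def normList {n : ℕ} (l : List (Formula n)) : List (Formula n) := l.foldr insertF []

/-- The minterm of `P` that is positive exactly on `S`. -/
def minterm {n : ℕ} (P S : Finset ℕ) : Formula n :=
  bigAnd ((P.sort (· ≤ ·)).map fun q =>
    if q ∈ S then Formula.atom q else Formula.neg (Formula.atom q))

/-- The subset of `Fin n` whose characteristic bits are those of `m`. -/
def natToFinset (n m : ℕ) : Finset (Fin n) :=
  Finset.univ.filter fun i => m.testBit (i : ℕ)

/-- A canonical enumeration of all nonempty subsets of the agent set. -/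
def neSubsets (n : ℕ) : List {B : Finset (Fin n) // B.Nonempty} :=
  ((List.range (2 ^ n)).map (natToFinset n)).filterMap fun B =>
    if h : B.Nonempty then some ⟨B, h⟩ else none

/-- `∇_B Φ = D_B (⋁Φ) ∧ ⋀_{φ ∈ Φ} ¬ D_B ¬ φ`. -/
def nabla {n : ℕ} (B : {B : Finset (Fin n) // B.Nonempty}) (Φ : List (Formula n)) : Formula n :=
  Formula.and (Formula.D B (bigOr Φ))
    (bigAnd (Φ.map fun φ => Formula.neg (Formula.D B (Formula.neg φ))))

/-- Underlying data of a d-canonical formula: a set of (positive) atoms together with,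
for every set `B` of agents, a list of successor data. -/
inductive CData (n : ℕ) : Type
  | mk (S : Finset ℕ) (succ : Finset (Fin n) → List (CData n)) : CData n

/-- The positive-atom component. -/
def CData.S {n : ℕ} : CData n → Finset ℕ
  | mk S _ => S

/-- The `B`-successor data. -/
def CData.succ {n : ℕ} : CData n → Finset (Fin n) → List (CData n)
  | mk _ f => f

/-- The d-canonical formula of depth `k` over `P` determined by the data `d`:
`δ_0 ∧ ⋀_{B} ∇_B Φ_B`. -/
def toFormula {n : ℕ} (P : Finset ℕ) : ℕ → CData n → Formula n
  | 0, d => minterm P (d.S ∩ P)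
  | (k+1), d =>
      Formula.and (minterm P (d.S ∩ P))
        (bigAnd ((neSubsets n).map fun B =>
          nabla B (normList ((d.succ B.1).map fun c => toFormula P k c))))

/-- `D^P_k`: the set of d-canonical formulas of depth `k` over `P`. -/
def DP {n : ℕ} (P : Finset ℕ) (k : ℕ) : Set (Formula n) := Set.range (toFormula P k)

/-- `R_B(δ)` for `δ` the level-`k` canonical formula with data `d`:
the set of `B`-successor canonical formulas (of level `k - 1`). -/
def RBset {n : ℕ} (P : Finset ℕ) (k : ℕ) (d : CData n) (B : Finset (Fin n)) :
    Set (Formula n) :=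
  {φ | ∃ c ∈ d.succ B, φ = toFormula P (k - 1) c}

/-- One pruning step `δ ↦ δ^↓` on data (first argument: the level of the input). -/
def downD {n : ℕ} : ℕ → CData n → CData n
  | 0, d => d
  | 1, d => CData.mk d.S (fun _ => [])
  | (k+2), d => CData.mk d.S (fun B => (d.succ B).map fun c => downD (k+1) c)

/-- `l`-fold pruning `δ ↦ δ^{↓l}` on data (first argument: the level of the input). -/
def downIter {n : ℕ} : ℕ → ℕ → CData n → CData n
  | _, 0, d => d
  | k, (l+1), d => downIter (k-1) l (downD k d)

/-- Truncation `δ ↦ δ^{↑l}` on data (first argument: the level of the input). -/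
def upD {n : ℕ} : ℕ → ℕ → CData n → CData n
  | _, 0, d => CData.mk d.S (fun _ => [])
  | 0, (_+1), d => d
  | (k+1), (l+1), d => CData.mk d.S (fun B => (d.succ B).map fun c => upD k l c)

/-- The canonical formula `δ` of level `k` with data `d`. -/
def cf {n : ℕ} (P : Finset ℕ) (k : ℕ) (d : CData n) : Formula n := toFormula P k d

/-- `δ^{↓l}` (a canonical formula of level `k - l`). -/
def cfDown {n : ℕ} (P : Finset ℕ) (k l : ℕ) (d : CData n) : Formula n :=
  toFormula P (k - l) (downIter k l d)

/-- `δ^{↑l}` (a canonical formula of level `min k l`). -/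
def cfUp {n : ℕ} (P : Finset ℕ) (k l : ℕ) (d : CData n) : Formula n :=
  toFormula P (min k l) (upD k l d)

/-- Literal elimination: `φ^p` replaces every occurrence of `¬p` by `⊤` and subsequently
every remaining occurrence of `p` by `⊤`. -/
def elim {n : ℕ} (p : ℕ) : Formula n → Formula n
  | .top => .top
  | .bot => .bot
  | .atom q => if q = p then .top else .atom q
  | .neg (.atom q) => if q = p then .top else .neg (.atom q)
  | .neg φ => .neg (elim p φ)
  | .and φ ψ => .and (elim p φ) (elim p ψ)
  | .or φ ψ => .or (elim p φ) (elim p ψ)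
  | .D B φ => .D B (elim p φ)


/-! ### Auxiliary development -/

section Aux
open Classical
variable {n : ℕ}

lemma sat_bigAnd {W : Type} (M : KModel n W) (s : W) (l : List (Formula n)) :
    Sat M s (bigAnd l) ↔ ∀ φ ∈ l, Sat M s φ := by
  induction l with
  | nil => simp [bigAnd, Sat]
  | cons a l ih => simp [bigAnd, Sat, ih]

lemma sat_bigOr {W : Type} (M : KModel n W) (s : W) (l : List (Formula n)) :
    Sat M s (bigOr l) ↔ ∃ φ ∈ l, Sat M s φ := by
  induction l with
  | nil => simp [bigOr, Sat]
  | cons a l ih => simp [bigOr, Sat, ih]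

lemma sum_range_two_pow (m : ℕ) : (Finset.range m).sum (fun i => 2^i) = 2^m - 1 := by
  induction m with
  | zero => simp
  | succ m ih =>
    rw [Finset.sum_range_succ, ih]
    have h1 : 1 ≤ 2^m := Nat.one_le_two_pow
    omega

lemma sum_two_pow_lt {s : Finset ℕ} {m : ℕ} (h : ∀ i ∈ s, i < m) :
    (s.sum fun i => 2^i) < 2^m := by
  have hsub : s ⊆ Finset.range m := fun i hi => Finset.mem_range.2 (h i hi)
  have h2 := Finset.sum_le_sum_of_subset hsub (f := fun i => 2^i)
  rw [sum_range_two_pow] at h2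
  have h1 : 1 ≤ 2^m := Nat.one_le_two_pow
  omega

lemma sum_two_pow_injOn : ∀ (m : ℕ) (s t : Finset ℕ), (∀ i ∈ s, i < m) → (∀ i ∈ t, i < m) →
    (s.sum fun i => 2^i) = (t.sum fun i => 2^i) → s = t := by
  intro m
  induction m with
  | zero =>
    intro s t hs ht _
    have h1 : s = ∅ := Finset.eq_empty_of_forall_notMem (fun i hi => by have := hs i hi; omega)
    have h2 : t = ∅ := Finset.eq_empty_of_forall_notMem (fun i hi => by have := ht i hi; omega)
    rw [h1, h2]
  | succ m ih =>
    intro s t hs ht hsum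
    by_cases hms : m ∈ s <;> by_cases hmt : m ∈ t
    · have es : s.sum (fun i => 2^i) = 2^m + (s.erase m).sum (fun i => 2^i) :=
        (Finset.add_sum_erase s _ hms).symm
      have et : t.sum (fun i => 2^i) = 2^m + (t.erase m).sum (fun i => 2^i) :=
        (Finset.add_sum_erase t _ hmt).symm
      have heq : (s.erase m).sum (fun i => 2^i) = (t.erase m).sum (fun i => 2^i) := by
        rw [es, et] at hsum; omega
      have h := ih (s.erase m) (t.erase m)
        (fun i hi => by
          have h1 := Finset.mem_erase.1 hi
          have := hs i h1.2; omega)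
        (fun i hi => by
          have h1 := Finset.mem_erase.1 hi
          have := ht i h1.2; omega)
        heq
      ext x
      by_cases hx : x = m
      · subst hx; simp [hms, hmt]
      · constructor
        · intro hxs
          have : x ∈ t.erase m := h ▸ Finset.mem_erase.2 ⟨hx, hxs⟩
          exact (Finset.mem_erase.1 this).2
        · intro hxt
          have : x ∈ s.erase m := h.symm ▸ Finset.mem_erase.2 ⟨hx, hxt⟩
          exact (Finset.mem_erase.1 this).2
    · exfalso
      have es : s.sum (fun i => 2^i) = 2^m + (s.erase m).sum (fun i => 2^i) :=
        (Finset.add_sum_erase s _ hms).symm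
      have hlt : t.sum (fun i => 2^i) < 2^m := sum_two_pow_lt (fun i hi => by
        have := ht i hi
        rcases Nat.lt_succ_iff_lt_or_eq.1 this with h | h
        · exact h
        · exact absurd (h ▸ hi) hmt)
      omega
    · exfalso
      have et : t.sum (fun i => 2^i) = 2^m + (t.erase m).sum (fun i => 2^i) :=
        (Finset.add_sum_erase t _ hmt).symm
      have hlt : s.sum (fun i => 2^i) < 2^m := sum_two_pow_lt (fun i hi => by
        have := hs i hi
        rcases Nat.lt_succ_iff_lt_or_eq.1 this with h | h
        · exact h
        · exact absurd (h ▸ hi) hms)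
      omega
    · exact ih s t
        (fun i hi => by
          have := hs i hi
          rcases Nat.lt_succ_iff_lt_or_eq.1 this with h | h
          · exact h
          · exact absurd (h ▸ hi) hms)
        (fun i hi => by
          have := ht i hi
          rcases Nat.lt_succ_iff_lt_or_eq.1 this with h | h
          · exact h
          · exact absurd (h ▸ hi) hmt)
        hsum

lemma finsum_two_pow_inj {B C : Finset (Fin n)}
    (h : (B.sum fun i => 2 ^ (i : ℕ)) = (C.sum fun i => 2 ^ (i : ℕ))) : B = C := by
  have hB : (B.image (fun i : Fin n => (i : ℕ))).sum (fun i => 2^i) = B.sum fun i => 2 ^ (i:ℕ) :=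
    Finset.sum_image (fun a _ b _ hab => Fin.val_injective hab)
  have hC : (C.image (fun i : Fin n => (i : ℕ))).sum (fun i => 2^i) = C.sum fun i => 2 ^ (i:ℕ) :=
    Finset.sum_image (fun a _ b _ hab => Fin.val_injective hab)
  have him : B.image (fun i : Fin n => (i : ℕ)) = C.image (fun i : Fin n => (i : ℕ)) :=
    sum_two_pow_injOn n _ _
      (fun i hi => by
        obtain ⟨a, _, rfl⟩ := Finset.mem_image.1 hi
        exact a.is_lt)
      (fun i hi => by
        obtain ⟨a, _, rfl⟩ := Finset.mem_image.1 hi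
        exact a.is_lt)
      (by rw [hB, hC, h])
  exact Finset.image_injective Fin.val_injective him


lemma fcode_inj : ∀ (φ ψ : Formula n), fcode φ = fcode ψ → φ = ψ := by
  intro φ
  induction φ with
  | top => intro ψ h; cases ψ <;> simp [fcode, Nat.pair_eq_pair] at h ⊢
  | bot => intro ψ h; cases ψ <;> simp [fcode, Nat.pair_eq_pair] at h ⊢
  | atom q => intro ψ h; cases ψ <;> simp_all [fcode, Nat.pair_eq_pair]
  | neg φ ih =>
    intro ψ h; cases ψ <;> simp [fcode, Nat.pair_eq_pair] at h ⊢
    exact ih _ h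
  | and φ₁ φ₂ ih1 ih2 =>
    intro ψ h; cases ψ <;> simp [fcode, Nat.pair_eq_pair] at h ⊢
    exact ⟨ih1 _ h.1, ih2 _ h.2⟩
  | or φ₁ φ₂ ih1 ih2 =>
    intro ψ h; cases ψ <;> simp [fcode, Nat.pair_eq_pair] at h ⊢
    exact ⟨ih1 _ h.1, ih2 _ h.2⟩
  | D B φ ih =>
    intro ψ h; cases ψ <;> simp [fcode, Nat.pair_eq_pair] at h ⊢
    exact ⟨Subtype.ext (finsum_two_pow_inj h.1), ih _ h.2⟩

/-! ### normList lemmas -/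

lemma mem_insertF {x φ : Formula n} : ∀ {l : List (Formula n)},
    x ∈ insertF φ l ↔ x = φ ∨ x ∈ l := by
  intro l
  induction l with
  | nil => simp [insertF]
  | cons a l ih =>
    by_cases h1 : fcode φ < fcode a
    · simp [insertF, h1]
    · by_cases h2 : fcode φ = fcode a
      · have : φ = a := fcode_inj _ _ h2
        subst this
        simp [insertF, h1]
      · simp [insertF, h1, h2, ih]
        tauto

lemma mem_normList {x : Formula n} : ∀ {l : List (Formula n)},
    x ∈ normList l ↔ x ∈ l := by
  intro l
  induction l with
  | nil => simp [normList]
  | cons a l ih =>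
    show x ∈ insertF a (normList l) ↔ _
    rw [mem_insertF]
    simp [ih]

def SC (l : List (Formula n)) : Prop := l.Chain' (fun a b => fcode a < fcode b)

instance : IsTrans (Formula n) (fun a b => fcode a < fcode b) :=
  ⟨fun _ _ _ h1 h2 => Nat.lt_trans h1 h2⟩

lemma SC_head_lt' {a : Formula n} {l : List (Formula n)} (h : SC (a :: l)) :
    ∀ x ∈ l, fcode a < fcode x := by
  have hp := List.isChain_iff_pairwise.1 h
  intro x hx
  exact (List.pairwise_cons.1 hp).1 x hx

lemma SC_insertF {φ : Formula n} : ∀ {l : List (Formula n)}, SC l → SC (insertF φ l) := by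
  intro l
  induction l with
  | nil => intro _; simp [insertF, SC, List.Chain']
  | cons a l ih =>
    intro h
    have htail : SC l := h.tail
    by_cases h1 : fcode φ < fcode a
    · simp only [insertF, if_pos h1]
      exact List.isChain_cons_cons.2 ⟨h1, h⟩
    · by_cases h2 : fcode φ = fcode a
      · simp only [insertF, if_neg h1, if_pos h2]; exact h
      · simp only [insertF, if_neg h1, if_neg h2]
        have h3 : fcode a < fcode φ := by omega
        rw [SC, List.Chain', List.isChain_iff_pairwise, List.pairwise_cons]
        constructor
        · intro x hx
          rcases mem_insertF.1 hx with rfl | hx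
          · exact h3
          · exact SC_head_lt' h x hx
        · exact List.isChain_iff_pairwise.1 (ih htail)

lemma SC_normList (l : List (Formula n)) : SC (normList l) := by
  induction l with
  | nil => simp [normList, SC, List.Chain']
  | cons a l ih => exact SC_insertF ih

lemma SC_eq_of_mem_iff : ∀ (l₁ l₂ : List (Formula n)), SC l₁ → SC l₂ →
    (∀ x, x ∈ l₁ ↔ x ∈ l₂) → l₁ = l₂ := by
  intro l₁
  induction l₁ with
  | nil =>
    intro l₂ _ _ hiff
    cases l₂ with
    | nil => rfl
    | cons b t => exact absurd ((hiff b).2 (by simp)) (by simp)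
  | cons a t₁ ih =>
    intro l₂ h₁ h₂ hiff
    cases l₂ with
    | nil => exact absurd ((hiff a).1 (by simp)) (by simp)
    | cons b t₂ =>
      have hab : a = b := by
        rcases List.mem_cons.1 ((hiff a).1 (List.mem_cons_self)) with h | h
        · exact h
        · rcases List.mem_cons.1 ((hiff b).2 (List.mem_cons_self)) with h' | h'
          · exact h'.symm
          · have c1 := SC_head_lt' h₁ b h'
            have c2 := SC_head_lt' h₂ a h
            omega
      subst hab
      have htails : ∀ x, x ∈ t₁ ↔ x ∈ t₂ := by
        intro x
        constructor
        · intro hx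
          rcases List.mem_cons.1 ((hiff x).1 (List.mem_cons_of_mem _ hx)) with h | h
          · exact absurd (SC_head_lt' h₁ x hx) (by rw [h]; omega)
          · exact h
        · intro hx
          rcases List.mem_cons.1 ((hiff x).2 (List.mem_cons_of_mem _ hx)) with h | h
          · exact absurd (SC_head_lt' h₂ x hx) (by rw [h]; omega)
          · exact h
      rw [ih t₂ h₁.tail h₂.tail htails]

/-! ### neSubsets completeness -/

lemma natToFinset_inj {m₁ m₂ : ℕ} (h1 : m₁ < 2^n) (h2 : m₂ < 2^n)
    (h : natToFinset n m₁ = natToFinset n m₂) : m₁ = m₂ := by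
  apply Nat.eq_of_testBit_eq
  intro i
  by_cases hi : i < n
  · have e1 : (⟨i, hi⟩ : Fin n) ∈ natToFinset n m₁ ↔ m₁.testBit i := by
      simp [natToFinset]
    have e2 : (⟨i, hi⟩ : Fin n) ∈ natToFinset n m₂ ↔ m₂.testBit i := by
      simp [natToFinset]
    rw [h] at e1
    by_cases hb : m₂.testBit i <;> by_cases hb1 : m₁.testBit i <;> simp_all
  · have : 2^n ≤ 2^i := Nat.pow_le_pow_right (by omega) (by omega)
    rw [Nat.testBit_eq_false_of_lt (by omega), Nat.testBit_eq_false_of_lt (by omega)]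

lemma natToFinset_surj (B : Finset (Fin n)) : ∃ m < 2^n, natToFinset n m = B := by
  classical
  have hinj : Set.InjOn (natToFinset n) (Finset.range (2^n) : Set ℕ) := by
    intro a ha b hb hab
    exact natToFinset_inj (by simpa using ha) (by simpa using hb) hab
  have hcard : ((Finset.range (2^n)).image (natToFinset n)).card = 2^n := by
    rw [Finset.card_image_of_injOn (by simpa using hinj), Finset.card_range]
  have huniv : (Finset.range (2^n)).image (natToFinset n) = Finset.univ := by
    apply Finset.eq_univ_of_card
    rw [hcard, Fintype.card_finset, Fintype.card_fin]
  have : B ∈ (Finset.range (2^n)).image (natToFinset n) := by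
    rw [huniv]; exact Finset.mem_univ B
  obtain ⟨m, hm, hmB⟩ := Finset.mem_image.1 this
  exact ⟨m, Finset.mem_range.1 hm, hmB⟩

lemma mem_neSubsets (B : {B : Finset (Fin n) // B.Nonempty}) : B ∈ neSubsets n := by
  obtain ⟨m, hm, hmB⟩ := natToFinset_surj B.1
  rw [neSubsets, List.mem_filterMap]
  refine ⟨B.1, ?_, ?_⟩
  · rw [List.mem_map]
    exact ⟨m, List.mem_range.2 hm, hmB⟩
  · rw [dif_pos B.2]

/-! ### Satisfaction of minterms and nabla -/

lemma sat_and {W : Type} (M : KModel n W) (s : W) (φ ψ : Formula n) :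
    Sat M s (.and φ ψ) ↔ Sat M s φ ∧ Sat M s ψ := Iff.rfl

lemma sat_neg {W : Type} (M : KModel n W) (s : W) (φ : Formula n) :
    Sat M s (.neg φ) ↔ ¬ Sat M s φ := Iff.rfl

lemma sat_D {W : Type} (M : KModel n W) (s : W) (B : {B : Finset (Fin n) // B.Nonempty})
    (φ : Formula n) : Sat M s (.D B φ) ↔ ∀ t, M.RB B.1 s t → Sat M t φ := Iff.rfl

lemma sat_minterm {W : Type} (M : KModel n W) (s : W) (P S : Finset ℕ) :
    Sat M s (minterm (n := n) P S) ↔ ∀ q ∈ P, (q ∈ M.V s ↔ q ∈ S) := by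
  rw [minterm, sat_bigAnd]
  constructor
  · intro h q hq
    have := h _ (List.mem_map.2 ⟨q, (Finset.mem_sort _).2 hq, rfl⟩)
    by_cases hqS : q ∈ S <;> simp [hqS, Sat] at this <;> tauto
  · intro h φ hφ
    obtain ⟨q, hq, rfl⟩ := List.mem_map.1 hφ
    have := h q ((Finset.mem_sort _).1 hq)
    by_cases hqS : q ∈ S <;> simp [hqS, Sat] <;> tauto

lemma minterm_congr {P S T : Finset ℕ} (h : ∀ q ∈ P, (q ∈ S ↔ q ∈ T)) :
    minterm (n := n) P S = minterm P T := by
  rw [minterm, minterm]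
  congr 1
  apply List.map_congr_left
  intro q hq
  have := h q ((Finset.mem_sort _).1 hq)
  by_cases hqS : q ∈ S
  · rw [if_pos hqS, if_pos (this.1 hqS)]
  · rw [if_neg hqS, if_neg (fun hT => hqS (this.2 hT))]

lemma sat_nabla {W : Type} (M : KModel n W) (s : W) (B : {B : Finset (Fin n) // B.Nonempty})
    (l : List (Formula n)) :
    Sat M s (nabla B l) ↔
      ((∀ t, M.RB B.1 s t → ∃ f ∈ l, Sat M t f) ∧ ∀ f ∈ l, ∃ t, M.RB B.1 s t ∧ Sat M t f) := by
  rw [nabla]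
  show (Sat M s _ ∧ Sat M s _) ↔ _
  rw [sat_bigAnd]
  constructor
  · rintro ⟨h1, h2⟩
    constructor
    · intro t ht
      exact (sat_bigOr M t l).1 (h1 t ht)
    · intro f hf
      have := h2 _ (List.mem_map.2 ⟨f, hf, rfl⟩)
      simp only [Sat, not_forall] at this
      obtain ⟨t, ht⟩ := this
      exact ⟨t, by tauto⟩
  · rintro ⟨h1, h2⟩
    constructor
    · intro t ht
      exact (sat_bigOr M t l).2 (h1 t ht)
    · intro φ hφ
      obtain ⟨f, hf, rfl⟩ := List.mem_map.1 hφ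
      obtain ⟨t, ht, hsat⟩ := h2 f hf
      show ¬ _
      simp only [Sat, not_forall]
      exact ⟨t, by tauto⟩

/-! ### elim lemmas -/

lemma elim_bigAnd (p : ℕ) (l : List (Formula n)) :
    elim p (bigAnd l) = bigAnd (l.map (elim p)) := by
  induction l with
  | nil => simp [bigAnd, elim]
  | cons a l ih => simp [bigAnd, elim, ih]

lemma elim_bigOr (p : ℕ) (l : List (Formula n)) :
    elim p (bigOr l) = bigOr (l.map (elim p)) := by
  induction l with
  | nil => simp [bigOr, elim]
  | cons a l ih => simp [bigOr, elim, ih]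

/-- Non-atomic formulas. -/
def NA (f : Formula n) : Prop := ∀ q, f ≠ .atom q

lemma elim_neg_of_NA {p : ℕ} {f : Formula n} (h : NA f) :
    elim p (.neg f) = .neg (elim p f) := by
  cases f <;> simp [elim]
  exact absurd rfl (h _)

lemma elim_nabla {p : ℕ} (B : {B : Finset (Fin n) // B.Nonempty}) {l : List (Formula n)}
    (h : ∀ f ∈ l, NA f) :
    elim p (nabla B l) = nabla B (l.map (elim p)) := by
  have eD : ∀ φ : Formula n, elim p (Formula.D B φ) = Formula.D B (elim p φ) := by
    intro φ; simp [elim]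
  rw [nabla, nabla]
  show Formula.and (elim p _) (elim p _) = _
  rw [eD, elim_bigOr, elim_bigAnd]
  congr 1
  rw [List.map_map, List.map_map]
  congr 1
  apply List.map_congr_left
  intro f hf
  show elim p (.neg (.D B (.neg f))) = _
  have e1 : elim p (.neg (.D B (.neg f))) = .neg (elim p (.D B (.neg f))) := by
    simp [elim]
  rw [e1]
  show Formula.neg (.D B (elim p (.neg f))) = _
  rw [elim_neg_of_NA (h f hf)]
  rfl

lemma NA_toFormula (P : Finset ℕ) (j : ℕ) (d : CData n) : NA (toFormula P j d) := by
  cases j with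
  | zero =>
    show NA (minterm P _)
    rw [minterm]
    cases (P.sort (· ≤ ·)).map
      (fun q => if q ∈ (CData.S d ∩ P) then Formula.atom q else Formula.neg (Formula.atom q)) with
    | nil => intro q h; simp [bigAnd] at h
    | cons a l => intro q h; simp [bigAnd] at h
  | succ j => intro q h; simp [toFormula] at h

/-! ### depth and atoms lemmas -/

lemma depth_bigAnd_le {l : List (Formula n)} {m : ℕ} (h : ∀ f ∈ l, Formula.depth f ≤ m) :
    (bigAnd l).depth ≤ m := by
  induction l with
  | nil => simp [bigAnd, Formula.depth]
  | cons a l ih =>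
    simp only [bigAnd, Formula.depth, max_le_iff]
    exact ⟨h a (by simp), ih (fun f hf => h f (by simp [hf]))⟩

lemma depth_bigOr_le {l : List (Formula n)} {m : ℕ} (h : ∀ f ∈ l, Formula.depth f ≤ m) :
    (bigOr l).depth ≤ m := by
  induction l with
  | nil => simp [bigOr, Formula.depth]
  | cons a l ih =>
    simp only [bigOr, Formula.depth, max_le_iff]
    exact ⟨h a (by simp), ih (fun f hf => h f (by simp [hf]))⟩

lemma depth_minterm (P S : Finset ℕ) : (minterm (n := n) P S).depth = 0 := by
  rw [minterm]
  have h := depth_bigAnd_le (n := n) (m := 0)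
    (l := (P.sort (· ≤ ·)).map fun q => if q ∈ S then Formula.atom q else .neg (.atom q))
  have := h (by
    intro f hf
    obtain ⟨q, _, rfl⟩ := List.mem_map.1 hf
    by_cases hq : q ∈ S <;> simp [hq, Formula.depth])
  omega

lemma depth_nabla_le {l : List (Formula n)} {j : ℕ} (B : {B : Finset (Fin n) // B.Nonempty})
    (h : ∀ f ∈ l, Formula.depth f ≤ j) : (nabla B l).depth ≤ j + 1 := by
  rw [nabla]
  simp only [Formula.depth, max_le_iff]
  constructor
  · have := depth_bigOr_le h
    omega
  · apply depth_bigAnd_le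
    intro f hf
    obtain ⟨g, hg, rfl⟩ := List.mem_map.1 hf
    simp only [Formula.depth]
    have := h g hg
    omega

lemma depth_toFormula (P : Finset ℕ) : ∀ (j : ℕ) (d : CData n), (toFormula P j d).depth ≤ j := by
  intro j
  induction j with
  | zero => intro d; rw [toFormula, depth_minterm]
  | succ j ih =>
    intro d
    rw [toFormula]
    simp only [Formula.depth, max_le_iff]
    constructor
    · rw [depth_minterm]; omega
    · apply depth_bigAnd_le
      intro f hf
      obtain ⟨B, _, rfl⟩ := List.mem_map.1 hf
      apply depth_nabla_le
      intro g hg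
      obtain ⟨c, _, rfl⟩ := List.mem_map.1 (mem_normList.1 hg)
      exact ih c

lemma mem_atoms_bigAnd {q : ℕ} {l : List (Formula n)} (h : q ∈ (bigAnd l).atoms) :
    ∃ f ∈ l, q ∈ f.atoms := by
  induction l with
  | nil => simp [bigAnd, Formula.atoms] at h
  | cons a l ih =>
    simp only [bigAnd, Formula.atoms, Finset.mem_union] at h
    rcases h with h | h
    · exact ⟨a, by simp, h⟩
    · obtain ⟨f, hf, hq⟩ := ih h
      exact ⟨f, by simp [hf], hq⟩

lemma mem_atoms_bigOr {q : ℕ} {l : List (Formula n)} (h : q ∈ (bigOr l).atoms) :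
    ∃ f ∈ l, q ∈ f.atoms := by
  induction l with
  | nil => simp [bigOr, Formula.atoms] at h
  | cons a l ih =>
    simp only [bigOr, Formula.atoms, Finset.mem_union] at h
    rcases h with h | h
    · exact ⟨a, by simp, h⟩
    · obtain ⟨f, hf, hq⟩ := ih h
      exact ⟨f, by simp [hf], hq⟩

lemma atoms_minterm (P S : Finset ℕ) : (minterm (n := n) P S).atoms ⊆ P := by
  intro q hq
  rw [minterm] at hq
  obtain ⟨f, hf, hq⟩ := mem_atoms_bigAnd hq
  obtain ⟨r, hr, rfl⟩ := List.mem_map.1 hf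
  have hrP := (Finset.mem_sort _).1 hr
  by_cases hrS : r ∈ S <;> simp [hrS, Formula.atoms] at hq <;> exact hq ▸ hrP

lemma atoms_toFormula (P : Finset ℕ) : ∀ (j : ℕ) (d : CData n), (toFormula P j d).atoms ⊆ P := by
  intro j
  induction j with
  | zero => intro d; exact atoms_minterm P _
  | succ j ih =>
    intro d q hq
    rw [toFormula] at hq
    simp only [Formula.atoms, Finset.mem_union] at hq
    rcases hq with hq | hq
    · exact atoms_minterm P _ hq
    · obtain ⟨f, hf, hq⟩ := mem_atoms_bigAnd hq
      obtain ⟨B, _, rfl⟩ := List.mem_map.1 hf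
      rw [nabla] at hq
      simp only [Formula.atoms, Finset.mem_union] at hq
      have key : ∀ g ∈ normList ((d.succ B.1).map fun c => toFormula P j c), q ∈ g.atoms → q ∈ P := by
        intro g hg hqg
        obtain ⟨c, _, rfl⟩ := List.mem_map.1 (mem_normList.1 hg)
        exact ih c hqg
      rcases hq with hq | hq
      · obtain ⟨g, hg, hqg⟩ := mem_atoms_bigOr hq
        exact key g hg hqg
      · obtain ⟨f', hf', hqf⟩ := mem_atoms_bigAnd hq
        obtain ⟨g, hg, rfl⟩ := List.mem_map.1 hf'
        simp only [Formula.atoms] at hqf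
        exact key g hg hqf

lemma atoms_elim (p : ℕ) : ∀ f : Formula n, (elim p f).atoms ⊆ f.atoms.erase p := by
  intro f
  induction f with
  | top => simp [elim, Formula.atoms]
  | bot => simp [elim, Formula.atoms]
  | atom q => by_cases h : q = p <;> simp [elim, h, Formula.atoms]
  | neg f ih =>
    rcases Classical.em (∃ q, f = Formula.atom q) with ⟨q, rfl⟩ | hna
    · by_cases h : q = p <;> simp [elim, h, Formula.atoms]
    · have hNA : NA f := fun q hq => hna ⟨q, hq⟩
      rw [elim_neg_of_NA hNA]
      show (elim p f).atoms ⊆ _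
      exact ih
  | and f g ihf ihg =>
    show ((elim p f).atoms ∪ (elim p g).atoms) ⊆ (f.atoms ∪ g.atoms).erase p
    intro q hq
    rcases Finset.mem_union.1 hq with h | h
    · have := ihf h
      rw [Finset.mem_erase] at this ⊢
      exact ⟨this.1, Finset.mem_union_left _ this.2⟩
    · have := ihg h
      rw [Finset.mem_erase] at this ⊢
      exact ⟨this.1, Finset.mem_union_right _ this.2⟩
  | or f g ihf ihg =>
    show ((elim p f).atoms ∪ (elim p g).atoms) ⊆ (f.atoms ∪ g.atoms).erase p
    intro q hq
    rcases Finset.mem_union.1 hq with h | h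
    · have := ihf h
      rw [Finset.mem_erase] at this ⊢
      exact ⟨this.1, Finset.mem_union_left _ this.2⟩
    · have := ihg h
      rw [Finset.mem_erase] at this ⊢
      exact ⟨this.1, Finset.mem_union_right _ this.2⟩
  | D B f ih => exact ih

/-! ### finiteness of canonical formulas -/

lemma list_bounded_finite {α : Type} {S : Set α} (hS : S.Finite) :
    ∀ m : ℕ, {l : List α | l.length ≤ m ∧ ∀ x ∈ l, x ∈ S}.Finite := by
  intro m
  induction m with
  | zero =>
    apply Set.Finite.subset (Set.finite_singleton ([] : List α))
    rintro l ⟨hl, -⟩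
    have : l = [] := List.length_eq_zero_iff.1 (Nat.le_zero.1 hl)
    simp [this]
  | succ m ih =>
    apply Set.Finite.subset ((Set.finite_singleton ([] : List α)).union
      (Set.Finite.image2 List.cons hS ih))
    rintro l ⟨hl, hmem⟩
    cases l with
    | nil => simp
    | cons a t =>
      right
      apply Set.mem_image2_of_mem (hmem a (by simp))
      refine ⟨by simp at hl; omega, fun x hx => hmem x (by simp [hx])⟩

lemma SC_nodup {l : List (Formula n)} (h : SC l) : l.Nodup := by
  have hp := List.isChain_iff_pairwise.1 h
  exact hp.imp (fun {a b} hlt he => by subst he; omega)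

lemma range_toFormula_finite (P : Finset ℕ) :
    ∀ j : ℕ, (Set.range (toFormula (n := n) P j)).Finite := by
  intro j
  induction j with
  | zero =>
    apply Set.Finite.subset (((P.powerset : Finset (Finset ℕ)) : Set (Finset ℕ)).toFinite.image
      (minterm (n := n) P))
    rintro f ⟨d, rfl⟩
    exact ⟨d.S ∩ P, by simp, rfl⟩
  | succ j ih =>
    set Fj := Set.range (toFormula (n := n) P j) with hFj
    set NL : Set (List (Formula n)) := {l | SC l ∧ ∀ x ∈ l, x ∈ Fj} with hNL
    have hNLfin : NL.Finite := by
      apply Set.Finite.subset (list_bounded_finite ih ih.toFinset.card)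
      rintro l ⟨hSC, hmem⟩
      refine ⟨?_, hmem⟩
      have hnd : l.Nodup := SC_nodup hSC
      classical
      have : l.toFinset ⊆ ih.toFinset := by
        intro x hx
        rw [Set.Finite.mem_toFinset]
        exact hmem x (List.mem_toFinset.1 hx)
      calc l.length = l.toFinset.card := (List.toFinset_card_of_nodup hnd).symm
        _ ≤ _ := Finset.card_le_card this
    have hT2fin : (Set.image2 (nabla (n := n)) Set.univ NL).Finite :=
      Set.Finite.image2 _ Set.finite_univ hNLfin
    have hT3fin := list_bounded_finite hT2fin (neSubsets n).length
    apply Set.Finite.subset (Set.Finite.image2 Formula.and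
      ((((P.powerset : Finset (Finset ℕ)) : Set (Finset ℕ)).toFinite.image (minterm (n := n) P)))
      (hT3fin.image bigAnd))
    rintro f ⟨d, rfl⟩
    rw [toFormula]
    apply Set.mem_image2_of_mem
    · exact ⟨d.S ∩ P, by simp, rfl⟩
    · refine ⟨_, ⟨by simp, ?_⟩, rfl⟩
      intro x hx
      obtain ⟨B, _, rfl⟩ := List.mem_map.1 hx
      apply Set.mem_image2_of_mem (Set.mem_univ B)
      refine ⟨SC_normList _, ?_⟩
      intro g hg
      obtain ⟨c, _, rfl⟩ := List.mem_map.1 (mem_normList.1 hg)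
      exact ⟨c, rfl⟩

/-! ### elim is entailed (for canonical formulas) -/

lemma sat_elim_minterm {W : Type} {M : KModel n W} {s : W} {p : ℕ} {P S : Finset ℕ}
    (h : Sat M s (minterm (n := n) P S)) : Sat M s (elim p (minterm (n := n) P S)) := by
  rw [minterm, elim_bigAnd, sat_bigAnd]
  intro f hf
  rw [List.map_map] at hf
  obtain ⟨q, hq, rfl⟩ := List.mem_map.1 hf
  have hsat := (sat_minterm M s P S).1 h q ((Finset.mem_sort _).1 hq)
  by_cases hqp : q = p
  · subst hqp
    by_cases hqS : q ∈ S <;> simp [Function.comp, hqS, elim, Sat]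
  · by_cases hqS : q ∈ S <;> simp [Function.comp, hqS, hqp, elim, Sat] <;> tauto

lemma sat_elim_minterm_iff {W : Type} {M : KModel n W} {s : W} {p : ℕ} {P S : Finset ℕ}
    (h : Sat M s (elim p (minterm (n := n) P S))) :
    ∀ q ∈ P, q ≠ p → (q ∈ M.V s ↔ q ∈ S) := by
  rw [minterm, elim_bigAnd, sat_bigAnd] at h
  intro q hq hqp
  have := h _ (by
    rw [List.map_map]
    exact List.mem_map.2 ⟨q, (Finset.mem_sort _).2 hq, rfl⟩)
  by_cases hqS : q ∈ S <;> simp [Function.comp, hqS, hqp, elim, Sat] at this <;> tauto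

lemma sat_elim_toFormula {p : ℕ} {P : Finset ℕ} :
    ∀ (j : ℕ) (d : CData n) {W : Type} (M : KModel n W) (s : W),
    Sat M s (toFormula P j d) → Sat M s (elim p (toFormula P j d)) := by
  intro j
  induction j with
  | zero => intro d W M s h; exact sat_elim_minterm h
  | succ j ih =>
    intro d W M s h
    rw [toFormula] at h ⊢
    rw [sat_and] at h
    rw [show elim p (Formula.and (minterm P (d.S ∩ P))
        (bigAnd ((neSubsets n).map fun B =>
          nabla B (normList ((d.succ B.1).map fun c => toFormula P j c)))) : Formula n)
      = Formula.and (elim p (minterm P (d.S ∩ P)))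
      (elim p (bigAnd ((neSubsets n).map fun B =>
        nabla B (normList ((d.succ B.1).map fun c => toFormula P j c))))) from rfl, sat_and]
    obtain ⟨h1, h2⟩ := h
    refine ⟨sat_elim_minterm h1, ?_⟩
    rw [elim_bigAnd, sat_bigAnd]
    intro f hf
    rw [List.map_map] at hf
    obtain ⟨B, hB, rfl⟩ := List.mem_map.1 hf
    show Sat M s (elim p (nabla B _))
    rw [elim_nabla B (fun g hg => by
      obtain ⟨c, _, rfl⟩ := List.mem_map.1 (mem_normList.1 hg)
      exact NA_toFormula P j c)]
    rw [sat_bigAnd] at h2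
    have hsat := h2 _ (List.mem_map.2 ⟨B, hB, rfl⟩)
    rw [sat_nabla] at hsat ⊢
    obtain ⟨hall, hex⟩ := hsat
    constructor
    · intro t ht
      obtain ⟨g, hg, hsg⟩ := hall t ht
      refine ⟨elim p g, List.mem_map.2 ⟨g, hg, rfl⟩, ?_⟩
      obtain ⟨c, _, rfl⟩ := List.mem_map.1 (mem_normList.1 hg)
      exact ih c M t hsg
    · intro f hf
      obtain ⟨g, hg, rfl⟩ := List.mem_map.1 hf
      obtain ⟨t, ht, hsg⟩ := hex g hg
      refine ⟨t, ht, ?_⟩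
      obtain ⟨c, _, rfl⟩ := List.mem_map.1 (mem_normList.1 hg)
      exact ih c M t hsg

/-! ### canonical descriptions of pointed models -/

attribute [local instance] Classical.propDecidable

/-- The set of atoms of `P` true at a world. -/
noncomputable def Vfin (P : Finset ℕ) {W : Type} (M : KModel n W) (u : W) : Finset ℕ :=
  P.filter (fun q => q ∈ M.V u)

/-- Pick a `B`-successor of `u` whose value under `g` is `f` (if one exists). -/
noncomputable def pick {W : Type} (M : KModel n W) (B : Finset (Fin n)) (u : W)
    (g : W → Formula n) (f : Formula n) : W :=
  if h : ∃ v, M.RB B u v ∧ g v = f then Classical.choose h else u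

lemma pick_spec {W : Type} {M : KModel n W} {B : Finset (Fin n)} {u : W}
    {g : W → Formula n} {f : Formula n} (h : ∃ v, M.RB B u v ∧ g v = f) :
    M.RB B u (pick M B u g f) ∧ g (pick M B u g f) = f := by
  rw [pick, dif_pos h]
  exact Classical.choose_spec h

/-- The image of the descriptions of the `B`-successors of `u`. -/
def descImg (P : Finset ℕ) {W : Type} (M : KModel n W) (j : ℕ) (dd : W → CData n)
    (B : Finset (Fin n)) (u : W) : Set (Formula n) :=
  (fun v => toFormula P j (dd v)) '' {v | M.RB B u v}

lemma descImg_finite (P : Finset ℕ) {W : Type} (M : KModel n W) (j : ℕ) (dd : W → CData n)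
    (B : Finset (Fin n)) (u : W) : (descImg P M j dd B u).Finite := by
  apply Set.Finite.subset (range_toFormula_finite P j)
  rintro f ⟨v, _, rfl⟩
  exact ⟨_, rfl⟩

/-- A list of representative successor data realizing each description. -/
noncomputable def descList (P : Finset ℕ) {W : Type} (M : KModel n W) (j : ℕ) (dd : W → CData n)
    (B : Finset (Fin n)) (u : W) : List (CData n) :=
  ((descImg_finite P M j dd B u).toFinset.toList).map
    (fun f => dd (pick M B u (fun v => toFormula P j (dd v)) f))

lemma mem_descList_map (P : Finset ℕ) {W : Type} (M : KModel n W) (j : ℕ) (dd : W → CData n)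
    (B : Finset (Fin n)) (u : W) (f : Formula n) :
    f ∈ (descList P M j dd B u).map (fun c => toFormula P j c) ↔
      ∃ v, M.RB B u v ∧ f = toFormula P j (dd v) := by
  rw [descList, List.map_map]
  simp only [Function.comp_def]
  constructor
  · intro hf
    obtain ⟨f₀, hf₀, rfl⟩ := List.mem_map.1 hf
    rw [Finset.mem_toList, Set.Finite.mem_toFinset] at hf₀
    obtain ⟨v, hv, rfl⟩ := hf₀
    have hs := pick_spec (M := M) (B := B) (u := u)
      (g := fun v => toFormula P j (dd v)) ⟨v, hv, rfl⟩
    exact ⟨_, hs.1, rfl⟩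
  · rintro ⟨v, hv, rfl⟩
    rw [List.mem_map]
    refine ⟨toFormula P j (dd v), ?_, ?_⟩
    · rw [Finset.mem_toList, Set.Finite.mem_toFinset]
      exact ⟨v, hv, rfl⟩
    · exact (pick_spec (M := M) (B := B) (u := u)
        (g := fun v => toFormula P j (dd v)) ⟨v, hv, rfl⟩).2

/-- The canonical description data of a pointed model, at each level. -/
noncomputable def descData (P : Finset ℕ) {W : Type} (M : KModel n W) : ℕ → W → CData n
  | 0 => fun u => CData.mk (Vfin P M u) (fun _ => [])
  | (j+1) => fun u => CData.mk (Vfin P M u) (fun B => descList P M j (descData P M j) B u)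

/-- The canonical description formula. -/
noncomputable def descF (P : Finset ℕ) {W : Type} (M : KModel n W) (j : ℕ) (u : W) : Formula n :=
  toFormula P j (descData P M j u)

lemma descData_S (P : Finset ℕ) {W : Type} (M : KModel n W) (j : ℕ) (u : W) :
    (descData P M j u).S = Vfin P M u := by
  cases j <;> rfl

lemma mem_descList (P : Finset ℕ) {W : Type} (M : KModel n W) (j : ℕ) (u : W)
    (B : Finset (Fin n)) (f : Formula n) :
    f ∈ ((descData P M (j+1) u).succ B).map (fun c => toFormula P j c) ↔
      ∃ v, M.RB B u v ∧ f = descF P M j v := by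
  rw [show (descData P M (j+1) u).succ B = descList P M j (descData P M j) B u from rfl]
  rw [mem_descList_map]
  rfl

lemma mem_normList_descList (P : Finset ℕ) {W : Type} (M : KModel n W) (j : ℕ) (u : W)
    (B : Finset (Fin n)) (f : Formula n) :
    f ∈ normList (((descData P M (j+1) u).succ B).map (fun c => toFormula P j c)) ↔
      ∃ v, M.RB B u v ∧ f = descF P M j v := by
  rw [mem_normList, mem_descList]

lemma descF_succ (P : Finset ℕ) {W : Type} (M : KModel n W) (j : ℕ) (u : W) :
    descF P M (j+1) u = Formula.and (minterm P (Vfin P M u ∩ P))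
      (bigAnd ((neSubsets n).map fun B =>
        nabla B (normList (((descData P M (j+1) u).succ B.1).map fun c => toFormula P j c)))) := by
  rw [descF, toFormula, descData_S]

lemma mem_Vfin {P : Finset ℕ} {W : Type} {M : KModel n W} {u : W} {q : ℕ} :
    q ∈ Vfin P M u ↔ q ∈ P ∧ q ∈ M.V u := by
  rw [Vfin, Finset.mem_filter]

/-- Truth lemma: every world satisfies its own description. -/
lemma sat_descF (P : Finset ℕ) {W : Type} (M : KModel n W) :
    ∀ (j : ℕ) (u : W), Sat M u (descF P M j u) := by
  intro j
  induction j with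
  | zero =>
    intro u
    rw [descF, toFormula, descData_S, sat_minterm]
    intro q hq
    rw [Finset.mem_inter, mem_Vfin]
    tauto
  | succ j ih =>
    intro u
    rw [descF_succ, sat_and]
    constructor
    · rw [sat_minterm]
      intro q hq
      rw [Finset.mem_inter, mem_Vfin]
      tauto
    · rw [sat_bigAnd]
      intro f hf
      obtain ⟨B, hB, rfl⟩ := List.mem_map.1 hf
      rw [sat_nabla]
      constructor
      · intro t ht
        exact ⟨descF P M j t, (mem_normList_descList P M j u B.1 _).2 ⟨t, ht, rfl⟩, ih t⟩
      · intro f hf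
        obtain ⟨v, hv, rfl⟩ := (mem_normList_descList P M j u B.1 f).1 hf
        exact ⟨v, hv, ih v⟩

lemma sat_descF_atom_iff (P : Finset ℕ) {W T : Type} {M : KModel n W} {N : KModel n T}
    {k : ℕ} {s : W} {t : T} (h : Sat N t (descF P M k s)) :
    ∀ q ∈ P, (q ∈ N.V t ↔ q ∈ M.V s) := by
  intro q hq
  have hmt : Sat N t (minterm P (Vfin P M s ∩ P)) := by
    cases k with
    | zero => rw [descF, toFormula, descData_S] at h; exact h
    | succ j => rw [descF_succ, sat_and] at h; exact h.1
  have h1 := (sat_minterm N t P _).1 hmt q hq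
  rw [Finset.mem_inter, mem_Vfin] at h1
  constructor
  · intro hv; exact ((h1.1 hv).1).2
  · intro hv; exact h1.2 ⟨⟨hq, hv⟩, hq⟩

/-- Agreement lemma: any model of the description of `(M,s)` agrees with `(M,s)` on
all formulas over `P` of depth at most `k`. -/
lemma agree (P : Finset ℕ) {W T : Type} (M : KModel n W) (N : KModel n T) :
    ∀ (k : ℕ) (s : W) (t : T), Sat N t (descF P M k s) →
      ∀ χ : Formula n, χ.depth ≤ k → χ.atoms ⊆ P → (Sat M s χ ↔ Sat N t χ) := by
  intro k
  induction k with
  | zero =>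
    intro s t h χ hdep hatoms
    induction χ with
    | top => simp [Sat]
    | bot => simp [Sat]
    | atom q =>
      have := sat_descF_atom_iff P h q (hatoms (by simp [Formula.atoms]))
      simp only [Sat]
      tauto
    | neg χ ih =>
      rw [sat_neg, sat_neg, ih hdep hatoms]
    | and χ₁ χ₂ ih1 ih2 =>
      simp only [Formula.depth, max_le_iff] at hdep
      simp only [Formula.atoms, Finset.union_subset_iff] at hatoms
      rw [sat_and, sat_and, ih1 hdep.1 hatoms.1, ih2 hdep.2 hatoms.2]
    | or χ₁ χ₂ ih1 ih2 =>
      simp only [Formula.depth, max_le_iff] at hdep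
      simp only [Formula.atoms, Finset.union_subset_iff] at hatoms
      show Sat M s χ₁ ∨ Sat M s χ₂ ↔ Sat N t χ₁ ∨ Sat N t χ₂
      rw [ih1 hdep.1 hatoms.1, ih2 hdep.2 hatoms.2]
    | D B χ ih =>
      exfalso
      simp only [Formula.depth] at hdep
      omega
  | succ k ihk =>
    intro s t h χ hdep hatoms
    induction χ with
    | top => simp [Sat]
    | bot => simp [Sat]
    | atom q =>
      have := sat_descF_atom_iff P h q (hatoms (by simp [Formula.atoms]))
      simp only [Sat]
      tauto
    | neg χ ih =>
      rw [sat_neg, sat_neg, ih hdep hatoms]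
    | and χ₁ χ₂ ih1 ih2 =>
      simp only [Formula.depth, max_le_iff] at hdep
      simp only [Formula.atoms, Finset.union_subset_iff] at hatoms
      rw [sat_and, sat_and, ih1 hdep.1 hatoms.1, ih2 hdep.2 hatoms.2]
    | or χ₁ χ₂ ih1 ih2 =>
      simp only [Formula.depth, max_le_iff] at hdep
      simp only [Formula.atoms, Finset.union_subset_iff] at hatoms
      show Sat M s χ₁ ∨ Sat M s χ₂ ↔ Sat N t χ₁ ∨ Sat N t χ₂
      rw [ih1 hdep.1 hatoms.1, ih2 hdep.2 hatoms.2]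
    | D B χ ih =>
      clear ih
      simp only [Formula.depth] at hdep
      have hdep' : χ.depth ≤ k := by omega
      have hatoms' : χ.atoms ⊆ P := hatoms
      rw [descF_succ, sat_and, sat_bigAnd] at h
      have hnab := h.2 _ (List.mem_map.2 ⟨B, mem_neSubsets B, rfl⟩)
      rw [sat_nabla] at hnab
      obtain ⟨hall, hex⟩ := hnab
      rw [sat_D, sat_D]
      constructor
      · intro hs t' ht'
        obtain ⟨f, hf, hsf⟩ := hall t' ht'
        obtain ⟨v, hv, rfl⟩ := (mem_normList_descList P M k s B.1 f).1 hf
        exact (ihk v t' hsf χ hdep' hatoms').1 (hs v hv)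
      · intro ht v hv
        obtain ⟨t', ht', hsf⟩ := hex (descF P M k v)
          ((mem_normList_descList P M k s B.1 _).2 ⟨v, hv, rfl⟩)
        exact (ihk v t' hsf χ hdep' hatoms').2 (ht t' ht')

/-- Uniqueness: a pointed model satisfies only its own canonical formula. -/
lemma canonical_unique (P : Finset ℕ) {W : Type} (M : KModel n W) :
    ∀ (k : ℕ) (d : CData n) (s : W), Sat M s (toFormula P k d) →
      toFormula P k d = descF P M k s := by
  intro k
  induction k with
  | zero =>
    intro d s h
    rw [toFormula] at h ⊢
    rw [descF, toFormula, descData_S]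
    apply minterm_congr
    intro q hq
    have := (sat_minterm M s P _).1 h q hq
    simp only [Finset.mem_inter, mem_Vfin] at this ⊢
    tauto
  | succ k ih =>
    intro d s h
    rw [toFormula, sat_and, sat_bigAnd] at h
    obtain ⟨h1, h2⟩ := h
    rw [toFormula, descF_succ]
    congr 1
    · apply minterm_congr
      intro q hq
      have := (sat_minterm M s P _).1 h1 q hq
      simp only [Finset.mem_inter, mem_Vfin] at this ⊢
      tauto
    · congr 1
      apply List.map_congr_left
      intro B hB
      congr 1
      apply SC_eq_of_mem_iff _ _ (SC_normList _) (SC_normList _)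
      intro f
      have hnab := h2 _ (List.mem_map.2 ⟨B, hB, rfl⟩)
      rw [sat_nabla] at hnab
      obtain ⟨hall, hex⟩ := hnab
      constructor
      · intro hf
        obtain ⟨v, hv, hsf⟩ := hex f hf
        obtain ⟨c, _, rfl⟩ := List.mem_map.1 (mem_normList.1 hf)
        rw [ih c v hsf]
        exact (mem_normList_descList P M k s B.1 _).2 ⟨v, hv, rfl⟩
      · intro hf
        obtain ⟨v, hv, rfl⟩ := (mem_normList_descList P M k s B.1 f).1 hf
        obtain ⟨g, hg, hsg⟩ := hall v hv
        obtain ⟨c, hc, rfl⟩ := List.mem_map.1 (mem_normList.1 hg)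
        rw [show descF P M k v = toFormula P k c from (ih c v hsg).symm]
        exact hg

/-- Monotone determination: descriptions at higher levels determine lower levels. -/
lemma descF_mono_eq (P : Finset ℕ) {W : Type} (M : KModel n W) {j k : ℕ} (hjk : j ≤ k)
    {v w : W} (h : descF P M k v = descF P M k w) : descF P M j v = descF P M j w := by
  have hv : Sat M v (descF P M k w) := h ▸ sat_descF P M k v
  have hag := agree P M M k w v hv
  have hsw : Sat M v (descF P M j w) :=
    (hag _ (le_trans (depth_toFormula P j _) hjk) (atoms_toFormula P j _)).1 (sat_descF P M j w)
  exact (canonical_unique P M j _ v hsw).symm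

/-! ### unpacking the elim-invariant -/

lemma elim_and (p : ℕ) (φ ψ : Formula n) :
    elim p (.and φ ψ) = .and (elim p φ) (elim p ψ) := by simp [elim]

lemma inv_minterm {W' WN : Type} {N : KModel n WN} {M' : KModel n W'} {p : ℕ} {u : WN}
    {u' : W'} {a : ℕ} (P : Finset ℕ) (h : Sat M' u' (elim p (descF P N a u))) :
    Sat M' u' (elim p (minterm P (Vfin P N u ∩ P))) := by
  cases a with
  | zero => rw [descF, toFormula, descData_S] at h; exact h
  | succ a => rw [descF_succ, elim_and, sat_and] at h; exact h.1

lemma inv_unpack {W' WN : Type} {N : KModel n WN} {M' : KModel n W'} {p : ℕ} {u : WN}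
    {u' : W'} {a : ℕ} (P : Finset ℕ) (h : Sat M' u' (elim p (descF P N (a+1) u)))
    (B : {B : Finset (Fin n) // B.Nonempty}) :
    (∀ v', M'.RB B.1 u' v' → ∃ v, N.RB B.1 u v ∧ Sat M' v' (elim p (descF P N a v))) ∧
    (∀ v, N.RB B.1 u v → ∃ v', M'.RB B.1 u' v' ∧ Sat M' v' (elim p (descF P N a v))) := by
  rw [descF_succ, elim_and, sat_and] at h
  have h2 := h.2
  rw [elim_bigAnd, sat_bigAnd, List.map_map] at h2
  have hnab := h2 _ (List.mem_map.2 ⟨B, mem_neSubsets B, rfl⟩)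
  rw [Function.comp_apply, elim_nabla B (fun g hg => by
    obtain ⟨v, _, rfl⟩ := (mem_normList_descList P N a u B.1 g).1 hg
    exact NA_toFormula P a _)] at hnab
  rw [sat_nabla] at hnab
  obtain ⟨hall, hex⟩ := hnab
  constructor
  · intro v' hv'
    obtain ⟨g, hg, hsg⟩ := hall v' hv'
    obtain ⟨f, hf, rfl⟩ := List.mem_map.1 hg
    obtain ⟨v, hv, rfl⟩ := (mem_normList_descList P N a u B.1 f).1 hf
    exact ⟨v, hv, hsg⟩
  · intro v hv
    obtain ⟨v', hv', hsg⟩ := hex (elim p (descF P N a v))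
      (List.mem_map.2 ⟨descF P N a v, (mem_normList_descList P N a u B.1 _).2 ⟨v, hv, rfl⟩, rfl⟩)
    exact ⟨v', hv', hsg⟩

/-! ### the bisimilar model construction -/

/-- Worlds of the constructed model: levelled invariant worlds plus a copy of `M'`. -/
def BWorld (P : Finset ℕ) (p : ℕ) {WN W' : Type} (N : KModel n WN) (M' : KModel n W') : Type :=
  {x : WN × W' × ℕ // Sat M' x.2.1 (elim p (descF P N x.2.2 x.1))} ⊕ W'

attribute [reducible] BWorld

/-- The model bisimilar to `M'` (except at `p`) satisfying the canonical formula. -/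
noncomputable def BModel (P : Finset ℕ) (p : ℕ) {WN W' : Type} (N : KModel n WN)
    (M' : KModel n W') : KModel n (BWorld P p N M') where
  R := fun i x y =>
    match x, y with
    | Sum.inl x, Sum.inl y =>
        N.R i x.1.1 y.1.1 ∧ M'.R i x.1.2.1 y.1.2.1 ∧ (y.1.2.2 + 1 = x.1.2.2 ∨ y.1 = x.1)
    | Sum.inl x, Sum.inr t' => x.1.2.2 = 0 ∧ M'.R i x.1.2.1 t'
    | Sum.inr t', Sum.inr t'' => M'.R i t' t''
    | Sum.inr _, Sum.inl _ => False
  V := fun x =>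
    match x with
    | Sum.inl x => (M'.V x.1.2.1 \ {p}) ∪ {q | q = p ∧ p ∈ N.V x.1.1}
    | Sum.inr t' => M'.V t'

section BModel

variable {WN W' : Type} {N : KModel n WN} {M' : KModel n W'} {p : ℕ} (P : Finset ℕ)

lemma BModel_R_inl_inl (i : Fin n) (x y : {x : WN × W' × ℕ // Sat M' x.2.1 (elim p (descF P N x.2.2 x.1))}) :
    (BModel P p N M').R i (Sum.inl x) (Sum.inl y) ↔
      N.R i x.1.1 y.1.1 ∧ M'.R i x.1.2.1 y.1.2.1 ∧ (y.1.2.2 + 1 = x.1.2.2 ∨ y.1 = x.1) :=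
  Iff.rfl

lemma BModel_RB_inl_inl {B : Finset (Fin n)} (hB : B.Nonempty)
    (x y : {x : WN × W' × ℕ // Sat M' x.2.1 (elim p (descF P N x.2.2 x.1))}) :
    (BModel P p N M').RB B (Sum.inl x) (Sum.inl y) ↔
      N.RB B x.1.1 y.1.1 ∧ M'.RB B x.1.2.1 y.1.2.1 ∧ (y.1.2.2 + 1 = x.1.2.2 ∨ y.1 = x.1) := by
  constructor
  · intro h
    obtain ⟨i0, hi0⟩ := hB
    exact ⟨fun i hi => (h i hi).1, fun i hi => (h i hi).2.1, (h i0 hi0).2.2⟩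
  · rintro ⟨h1, h2, h3⟩ i hi
    exact ⟨h1 i hi, h2 i hi, h3⟩

lemma BModel_RB_inl_inr {B : Finset (Fin n)} (hB : B.Nonempty)
    (x : {x : WN × W' × ℕ // Sat M' x.2.1 (elim p (descF P N x.2.2 x.1))}) (t' : W') :
    (BModel P p N M').RB B (Sum.inl x) (Sum.inr t') ↔
      x.1.2.2 = 0 ∧ M'.RB B x.1.2.1 t' := by
  constructor
  · intro h
    obtain ⟨i0, hi0⟩ := hB
    exact ⟨(h i0 hi0).1, fun i hi => (h i hi).2⟩
  · rintro ⟨h1, h2⟩ i hi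
    exact ⟨h1, h2 i hi⟩

lemma BModel_RB_inr_inr {B : Finset (Fin n)} (t' t'' : W') :
    (BModel P p N M').RB B (Sum.inr t') (Sum.inr t'') ↔ M'.RB B t' t'' := Iff.rfl

lemma BModel_RB_inr_inl {B : Finset (Fin n)} (hB : B.Nonempty)
    (t' : W') (y : {x : WN × W' × ℕ // Sat M' x.2.1 (elim p (descF P N x.2.2 x.1))}) :
    ¬ (BModel P p N M').RB B (Sum.inr t') (Sum.inl y) := by
  intro h
  obtain ⟨i0, hi0⟩ := hB
  exact (h i0 hi0)

lemma BModel_V_inl (x : {x : WN × W' × ℕ // Sat M' x.2.1 (elim p (descF P N x.2.2 x.1))}) :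
    (BModel P p N M').V (Sum.inl x) = (M'.V x.1.2.1 \ {p}) ∪ {q | q = p ∧ p ∈ N.V x.1.1} := rfl

lemma BModel_minterm (hpP : p ∈ P)
    (x : {x : WN × W' × ℕ // Sat M' x.2.1 (elim p (descF P N x.2.2 x.1))}) :
    Sat (BModel P p N M') (Sum.inl x) (minterm P (Vfin P N x.1.1 ∩ P)) := by
  rw [sat_minterm]
  intro q hq
  rw [BModel_V_inl]
  by_cases hqp : q = p
  · subst hqp
    simp only [Set.mem_union, Set.mem_diff, Set.mem_singleton_iff, Set.mem_setOf_eq,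
      Finset.mem_inter, mem_Vfin]
    tauto
  · have h1 := sat_elim_minterm_iff (inv_minterm P x.2) q hq hqp
    simp only [Set.mem_union, Set.mem_diff, Set.mem_singleton_iff, Set.mem_setOf_eq,
      Finset.mem_inter, mem_Vfin] at h1 ⊢
    tauto

/-- Truth of the (truncated) canonical description in the constructed model. -/
lemma sat_BModel_descF (hpP : p ∈ P) :
    ∀ (j a : ℕ), j ≤ a → ∀ (x : {x : WN × W' × ℕ // Sat M' x.2.1 (elim p (descF P N x.2.2 x.1))}),
      x.1.2.2 = a → Sat (BModel P p N M') (Sum.inl x) (descF P N j x.1.1) := by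
  intro j
  induction j with
  | zero =>
    intro a _ x _
    rw [descF, toFormula, descData_S]
    exact BModel_minterm P hpP x
  | succ j ih =>
    rintro a hja x hxa
    obtain ⟨a', rfl⟩ : ∃ a', a = a' + 1 := ⟨a - 1, by omega⟩
    rw [descF_succ, sat_and]
    refine ⟨BModel_minterm P hpP x, ?_⟩
    rw [sat_bigAnd]
    intro f hf
    obtain ⟨B, hB, rfl⟩ := List.mem_map.1 hf
    rw [sat_nabla]
    constructor
    · intro y hy
      cases y with
      | inl y =>
        rw [BModel_RB_inl_inl P B.2] at hy
        obtain ⟨hN, hM, hlev⟩ := hy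
        rcases hlev with hdec | heq
        · refine ⟨descF P N j y.1.1,
            (mem_normList_descList P N j x.1.1 B.1 _).2 ⟨y.1.1, hN, rfl⟩, ?_⟩
          exact ih y.1.2.2 (by omega) y rfl
        · have hyx : y = x := Subtype.ext heq
          subst hyx
          exact ⟨descF P N j y.1.1,
            (mem_normList_descList P N j y.1.1 B.1 _).2 ⟨y.1.1, (heq ▸ hN : N.RB B.1 y.1.1 y.1.1), rfl⟩,
            ih y.1.2.2 (by omega) y rfl⟩
      | inr t' =>
        rw [BModel_RB_inl_inr P B.2] at hy
        omega
    · intro f hf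
      obtain ⟨v, hv, rfl⟩ := (mem_normList_descList P N j x.1.1 B.1 f).1 hf
      have hx2 : Sat M' x.1.2.1 (elim p (descF P N (a'+1) x.1.1)) := by
        have := x.2
        rwa [hxa] at this
      obtain ⟨v', hv', hsv'⟩ := (inv_unpack P hx2 B).2 v hv
      refine ⟨Sum.inl ⟨(v, v', a'), hsv'⟩, ?_, ?_⟩
      · rw [BModel_RB_inl_inl P B.2]
        exact ⟨hv, hv', Or.inl (show a' + 1 = x.1.2.2 by omega)⟩
      · exact ih a' (Nat.le_of_succ_le_succ hja) ⟨(v, v', a'), hsv'⟩ rfl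

lemma BModel_isModel {L : MSys} (hL : L = MSys.K ∨ L = MSys.D ∨ L = MSys.T)
    (hN : IsModel L N) (hM' : IsModel L M') : IsModel L (BModel P p N M') := by
  rcases hL with rfl | rfl | rfl
  · trivial
  · intro i
    intro x
    cases x with
    | inl x =>
      rcases Nat.eq_zero_or_eq_succ_pred x.1.2.2 with h0 | hsucc
      · obtain ⟨t', ht'⟩ := hM' i x.1.2.1
        exact ⟨Sum.inr t', h0, ht'⟩
      · set a' := x.1.2.2 - 1
        obtain ⟨v, hv⟩ := hN i x.1.1
        have hx2 : Sat M' x.1.2.1 (elim p (descF P N (a'+1) x.1.1)) := by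
          have := x.2
          rwa [hsucc] at this
        have hBi : ({i} : Finset (Fin n)).Nonempty := ⟨i, by simp⟩
        obtain ⟨v', hv', hsv'⟩ := (inv_unpack P hx2 ⟨{i}, hBi⟩).2 v
          (fun j hj => by
            rw [Finset.mem_singleton] at hj
            rwa [hj])
        refine ⟨Sum.inl ⟨(v, v', a'), hsv'⟩, hv, ?_, Or.inl hsucc.symm⟩
        exact hv' i (by simp)
    | inr t' =>
      obtain ⟨t'', ht''⟩ := hM' i t'
      exact ⟨Sum.inr t'', ht''⟩
  · intro i
    intro x
    cases x with
    | inl x => exact ⟨hN i x.1.1, hM' i x.1.2.1, Or.inr rfl⟩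
    | inr t' => exact hM' i t'

/-- The bisimulation relation: projection to `M'`. -/
def Brho : BWorld P p N M' → W' → Prop
  | Sum.inl x, t' => t' = x.1.2.1
  | Sum.inr v', t' => t' = v'

lemma Brho_props : ∀ (x : BWorld P p N M') (t' : W'), Brho P x t' →
    ((∀ q : ℕ, q ≠ p → (q ∈ (BModel P p N M').V x ↔ q ∈ M'.V t')) ∧
     (∀ B : Finset (Fin n), B.Nonempty → ∀ y, (BModel P p N M').RB B x y →
        ∃ v', M'.RB B t' v' ∧ Brho P y v') ∧
     (∀ B : Finset (Fin n), B.Nonempty → ∀ v', M'.RB B t' v' →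
        ∃ y, (BModel P p N M').RB B x y ∧ Brho P y v')) := by
  intro x t' hrho
  cases x with
  | inl x =>
    have ht' : t' = x.1.2.1 := hrho
    subst ht'
    refine ⟨?_, ?_, ?_⟩
    · intro q hq
      rw [BModel_V_inl]
      simp only [Set.mem_union, Set.mem_diff, Set.mem_singleton_iff, Set.mem_setOf_eq]
      tauto
    · intro B hB y hy
      cases y with
      | inl y =>
        rw [BModel_RB_inl_inl P hB] at hy
        exact ⟨y.1.2.1, hy.2.1, rfl⟩
      | inr t'' =>
        rw [BModel_RB_inl_inr P hB] at hy
        exact ⟨t'', hy.2, rfl⟩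
    · intro B hB v' hv'
      rcases Nat.eq_zero_or_eq_succ_pred x.1.2.2 with h0 | hsucc
      · exact ⟨Sum.inr v', (BModel_RB_inl_inr P hB x v').2 ⟨h0, hv'⟩, rfl⟩
      · set a' := x.1.2.2 - 1
        have hx2 : Sat M' x.1.2.1 (elim p (descF P N (a'+1) x.1.1)) := by
          have := x.2
          rwa [hsucc] at this
        obtain ⟨v, hNv, hsv'⟩ := (inv_unpack P hx2 ⟨B, hB⟩).1 v' hv'
        refine ⟨Sum.inl ⟨(v, v', a'), hsv'⟩, ?_, rfl⟩
        rw [BModel_RB_inl_inl P hB]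
        exact ⟨hNv, hv', Or.inl hsucc.symm⟩
  | inr v₀ =>
    have ht' : t' = v₀ := hrho
    subst ht'
    refine ⟨fun q _ => Iff.rfl, ?_, ?_⟩
    · intro B hB y hy
      cases y with
      | inl y => exact absurd hy (BModel_RB_inr_inl P hB _ _)
      | inr t'' => exact ⟨t'', hy, rfl⟩
    · intro B hB v' hv'
      exact ⟨Sum.inr v', hv', rfl⟩

end BModel

/-! ### bisimulation invariance for p-free formulas -/

lemma pbisim_sat {W W'' : Type} {M : KModel n W} {M'' : KModel n W''} {p : ℕ}
    (ρ : W → W'' → Prop)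
    (hρ : ∀ u u', ρ u u' →
      ((∀ q : ℕ, q ≠ p → (q ∈ M.V u ↔ q ∈ M''.V u')) ∧
       (∀ B : Finset (Fin n), B.Nonempty → ∀ v, M.RB B u v → ∃ v', M''.RB B u' v' ∧ ρ v v') ∧
       (∀ B : Finset (Fin n), B.Nonempty → ∀ v', M''.RB B u' v' → ∃ v, M.RB B u v ∧ ρ v v'))) :
    ∀ χ : Formula n, p ∉ χ.atoms → ∀ u u', ρ u u' → (Sat M u χ ↔ Sat M'' u' χ) := by
  intro χ
  induction χ with
  | top => intro _ u u' _; simp [Sat]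
  | bot => intro _ u u' _; simp [Sat]
  | atom q =>
    intro hp u u' hr
    have hq : q ≠ p := by
      intro h
      exact hp (by simp [Formula.atoms, h])
    exact (hρ u u' hr).1 q hq
  | neg χ ih =>
    intro hp u u' hr
    rw [sat_neg, sat_neg, ih hp u u' hr]
  | and χ₁ χ₂ ih1 ih2 =>
    intro hp u u' hr
    simp only [Formula.atoms, Finset.mem_union, not_or] at hp
    rw [sat_and, sat_and, ih1 hp.1 u u' hr, ih2 hp.2 u u' hr]
  | or χ₁ χ₂ ih1 ih2 =>
    intro hp u u' hr
    simp only [Formula.atoms, Finset.mem_union, not_or] at hp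
    show Sat M u χ₁ ∨ Sat M u χ₂ ↔ _
    rw [ih1 hp.1 u u' hr, ih2 hp.2 u u' hr]
    rfl
  | D B χ ih =>
    intro hp u u' hr
    rw [sat_D, sat_D]
    constructor
    · intro h v' hv'
      obtain ⟨v, hv, hrv⟩ := (hρ u u' hr).2.2 B.1 B.2 v' hv'
      exact (ih hp v v' hrv).1 (h v hv)
    · intro h v hv
      obtain ⟨v', hv', hrv⟩ := (hρ u u' hr).2.1 B.1 B.2 v hv
      exact (ih hp v v' hrv).2 (h v' hv')

end Aux
/-- uniform interpolation for `K_n D`, `D_n D`, and `T_n D`; the uniform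
interpolant of `φ` is the disjunction of the remainders of the satisfiable canonical
formulas of depth `dep(φ)` entailing `φ`. -/
theorem uniform_interpolation_K_D_T {n : ℕ} (L : MSys)
    (hL : L = MSys.K ∨ L = MSys.D ∨ L = MSys.T) :
    HasUIP (n := n) L ∧
    ∀ (P : Finset ℕ) (p : ℕ) (φ : Formula n),
      p ∈ P → φ.atoms ⊆ P → SatL L φ →
      ∀ Δ : List (Formula n),
        (∀ δ : Formula n,
          δ ∈ Δ ↔ (δ ∈ DP P φ.depth ∧ SatL L δ ∧ Entails L δ φ)) →
        IsUI L P p φ (bigOr (Δ.map (elim p))) := by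
  have main : ∀ (P : Finset ℕ) (p : ℕ) (φ : Formula n),
      p ∈ P → φ.atoms ⊆ P → SatL L φ →
      ∀ Δ : List (Formula n),
        (∀ δ : Formula n, δ ∈ Δ ↔ (δ ∈ DP P φ.depth ∧ SatL L δ ∧ Entails L δ φ)) →
        IsUI L P p φ (bigOr (Δ.map (elim p))) := by
    intro P p φ hpP hatoms hsat Δ hΔ
    have hdesc : ∀ (W : Type) (M : KModel n W) (s : W), IsModel L M → Sat M s φ →
        descF P M φ.depth s ∈ Δ := by
      intro W M s hM hs
      rw [hΔ]
      refine ⟨⟨descData P M φ.depth s, rfl⟩, ⟨W, M, s, hM, sat_descF P M _ s⟩, ?_⟩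
      intro W1 M1 hM1 t1 hsatδ
      exact (agree P M M1 φ.depth s t1 hsatδ φ le_rfl hatoms).1 hs
    have hsatψ : ∀ (W : Type) (M : KModel n W) (s : W), IsModel L M → Sat M s φ →
        Sat M s (bigOr (Δ.map (elim p))) := by
      intro W M s hM hs
      rw [sat_bigOr]
      exact ⟨elim p (descF P M φ.depth s),
        List.mem_map.2 ⟨_, hdesc W M s hM hs, rfl⟩,
        sat_elim_toFormula φ.depth _ M s (sat_descF P M _ s)⟩
    obtain ⟨W0, M0, s0, hM0, hs0⟩ := hsat
    refine ⟨⟨W0, M0, s0, hM0, hsatψ W0 M0 s0 hM0 hs0⟩, ?_, ?_⟩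
    · intro q hq
      obtain ⟨g, hg, hqg⟩ := mem_atoms_bigOr hq
      obtain ⟨δ, hδ, rfl⟩ := List.mem_map.1 hg
      have h1 := atoms_elim p δ hqg
      rw [Finset.mem_erase] at h1 ⊢
      obtain ⟨d, rfl⟩ := ((hΔ δ).1 hδ).1
      exact ⟨h1.1, atoms_toFormula P _ d h1.2⟩
    · intro χ hpχ
      constructor
      · intro hφχ W' M' hM' s' hψ
        rw [sat_bigOr] at hψ
        obtain ⟨g, hg, hsg⟩ := hψ
        obtain ⟨δ, hδΔ, rfl⟩ := List.mem_map.1 hg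
        obtain ⟨hDP, hSatδ, hEnt⟩ := (hΔ δ).1 hδΔ
        obtain ⟨d, hd⟩ := hDP
        obtain ⟨WN, N, n0, hN, hsatδ⟩ := hSatδ
        have hδdesc : δ = descF P N φ.depth n0 := by
          rw [← hd]
          exact canonical_unique P N φ.depth d n0 (by rw [hd]; exact hsatδ)
        have hInv : Sat M' s' (elim p (descF P N φ.depth n0)) := by
          rw [← hδdesc]; exact hsg
        have hsδ : Sat (BModel P p N M') (Sum.inl ⟨(n0, s', φ.depth), hInv⟩) δ := by
          rw [hδdesc]
          exact sat_BModel_descF P hpP φ.depth φ.depth le_rfl ⟨(n0, s', φ.depth), hInv⟩ rfl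
        have hModL := BModel_isModel (p := p) P hL hN hM'
        have hsφ := hEnt _ _ hModL _ hsδ
        have hsχ := hφχ _ _ hModL _ hsφ
        exact (pbisim_sat (Brho P) (Brho_props P) χ hpχ
          (Sum.inl ⟨(n0, s', φ.depth), hInv⟩) s'
          (show Brho P (Sum.inl ⟨(n0, s', φ.depth), hInv⟩) s' from rfl)).1 hsχ
      · intro hψχ W M hM s hφs
        exact hψχ W M hM s (hsatψ W M s hM hφs)
  constructor
  · intro P p φ hpP hatoms hsat
    have hfin : {δ : Formula n | δ ∈ DP P φ.depth ∧ SatL L δ ∧ Entails L δ φ}.Finite :=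
      Set.Finite.subset (range_toFormula_finite P φ.depth) (fun δ hδ => hδ.1)
    refine ⟨bigOr (hfin.toFinset.toList.map (elim p)), main P p φ hpP hatoms hsat _ ?_⟩
    intro δ
    rw [Finset.mem_toList, Set.Finite.mem_toFinset]
    exact Iff.rfl
  · exact main

end DKLogic
end

section
/- For any Kripke model M, the following are equivalent: (1) for every world t of M and every agent i ∈ 𝒜, the set RT(t, R_i ∪ R_i^{−1}) is quasi-i-equivalent; (2) every relation R_i of M is transitive and Euclidean. Furthermore, the following are also equivalent: (3) for every world t of M and every agent i ∈ 𝒜, the set RT(t, R_i ∪ R_i^{−1}) is i-equivalent; (4) every relation R_i of M is transitive, Euclidean, and reflexive. -/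
/-!
Common framework: multi-agent epistemic modal logic with distributed knowledge.
Agents are `Fin n`, atoms are natural numbers.
-/

namespace DKLogic

/-- The image of `t` under the reflexive-transitive closure of `R_i ∪ R_i⁻¹`. -/
def RTsym {n : ℕ} {W : Type} (M : KModel n W) (i : Fin n) (t : W) : Set W :=
  {u | Relation.ReflTransGen (fun a b => M.R i a b ∨ M.R i b a) t u}

/-- A set of worlds is quasi-`i`-equivalent. -/
def QuasiEquiv {n : ℕ} {W : Type} (M : KModel n W) (i : Fin n) (T : Set W) : Prop :=
  (∀ t ∈ T, T = RTsym M i t) ∧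
  ∀ t₁ ∈ T, ∀ t₂ ∈ T, ∀ u : W, M.R i t₁ u ↔ M.R i t₂ u

/-- A set of worlds is `i`-equivalent. -/
def IEquiv {n : ℕ} {W : Type} (M : KModel n W) (i : Fin n) (T : Set W) : Prop :=
  QuasiEquiv M i T ∧ ∀ t ∈ T, M.R i t t

private lemma succ_eq_of_rtsym {n : ℕ} {W : Type} (M : KModel n W) (i : Fin n)
    (hT : Transitive (M.R i)) (hE : Euclidean (M.R i)) {t u : W}
    (h : Relation.ReflTransGen (fun a b => M.R i a b ∨ M.R i b a) t u) :
    ∀ v, M.R i t v ↔ M.R i u v := by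
  induction h with
  | refl => intro v; rfl
  | tail _ hstep ih =>
    intro v
    rw [ih v]
    rcases hstep with h1 | h1
    · exact ⟨fun h2 => hE _ _ _ h1 h2, fun h2 => hT h1 h2⟩
    · exact ⟨fun h2 => hT h1 h2, fun h2 => hE _ _ _ h1 h2⟩

private lemma rtsym_eq {n : ℕ} {W : Type} (M : KModel n W) (i : Fin n) {t u : W}
    (h : u ∈ RTsym M i t) : RTsym M i t = RTsym M i u := by
  have hsym : Symmetric (fun a b => M.R i a b ∨ M.R i b a) := fun a b h => h.symm
  have hs : Symmetric (Relation.ReflTransGen (fun a b => M.R i a b ∨ M.R i b a)) :=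
    fun _ _ h => (@Relation.ReflTransGen.stdSymm _ _ ⟨hsym⟩).symm _ _ h
  ext w
  constructor
  · intro hw; exact Relation.ReflTransGen.trans (hs h) hw
  · intro hw; exact Relation.ReflTransGen.trans h hw

private lemma quasi_of_te {n : ℕ} {W : Type} (M : KModel n W) (i : Fin n)
    (hT : Transitive (M.R i)) (hE : Euclidean (M.R i)) (t : W) :
    QuasiEquiv M i (RTsym M i t) := by
  refine ⟨fun u hu => rtsym_eq M i hu, fun t₁ h₁ t₂ h₂ u => ?_⟩
  rw [← succ_eq_of_rtsym M i hT hE h₁ u, succ_eq_of_rtsym M i hT hE h₂ u]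

private lemma te_of_quasi {n : ℕ} {W : Type} (M : KModel n W)
    (h : ∀ (t : W) (i : Fin n), QuasiEquiv M i (RTsym M i t)) (i : Fin n) :
    Transitive (M.R i) ∧ Euclidean (M.R i) := by
  have key : ∀ x y : W, M.R i x y → ∀ v, M.R i x v ↔ M.R i y v := by
    intro x y hxy v
    exact (h x i).2 x Relation.ReflTransGen.refl y
      (Relation.ReflTransGen.single (Or.inl hxy)) v
  constructor
  · intro x y z hxy hyz; exact (key x y hxy z).mpr hyz
  · intro x y z hxy hxz; exact (key x y hxy z).mp hxz

/-- quasi-`i`-equivalence of all `RT(t, R_i ∪ R_i⁻¹)` characterises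
transitive Euclidean models, and `i`-equivalence characterises transitive Euclidean
reflexive models. -/
theorem quasi_equivalence_characterization {n : ℕ} {W : Type} (M : KModel n W) :
    ((∀ (t : W) (i : Fin n), QuasiEquiv M i (RTsym M i t)) ↔
      ∀ i : Fin n, Transitive (M.R i) ∧ Euclidean (M.R i)) ∧
    ((∀ (t : W) (i : Fin n), IEquiv M i (RTsym M i t)) ↔
      ∀ i : Fin n, Transitive (M.R i) ∧ Euclidean (M.R i) ∧ Reflexive (M.R i)) := by
  constructor
  · constructor
    · exact fun h i => te_of_quasi M h i
    · intro h t i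
      exact quasi_of_te M i (h i).1 (h i).2 t
  · constructor
    · intro h i
      refine ⟨(te_of_quasi M (fun t j => (h t j).1) i).1,
        (te_of_quasi M (fun t j => (h t j).1) i).2, fun x => ?_⟩
      exact (h x i).2 x Relation.ReflTransGen.refl
    · intro h t i
      exact ⟨quasi_of_te M i (h i).1 (h i).2.1 t,
        fun u _ => (h i).2.2 u⟩

end DKLogic
end
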